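/- Let X be a real random variable and (cₙ) positive reals with cₙ/√n nondecreasing and tending to infinity. If ∑ₙ P(|X| ≥ cₙ) < ∞, then E[X² 1{|X| ≤ cₙ}] = o(cₙ²/n) as n → ∞. -/

import Mathlib

open MeasureTheory ProbabilityTheory Filter Set
open scoped ProbabilityTheory

theorem stmt_5 {Ω : Type*} [MeasureSpace Ω] [IsProbabilityMeasure (ℙ : Measure Ω)]
    (X : Ω → ℝ) (hX : Measurable X)
    (c : ℕ → ℝ) (hcpos : ∀ n, 1 ≤ n → 0 < c n)
    (hmono : ∀ m n, 1 ≤ m → m ≤ n → c m / Real.sqrt m ≤ c n / Real.sqrt n)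
    (htop : Tendsto (fun n => c n / Real.sqrt n) atTop atTop)
    (hsum : Summable (fun n => (ℙ {ω | c n ≤ |X ω|}).toReal)) :
    Tendsto (fun (n : ℕ) => (n : ℝ) * (∫ ω, (if |X ω| ≤ c n then (X ω) ^ 2 else 0)) / (c n) ^ 2)
      atTop (nhds 0) := by
  classical
  set p : ℕ → ℝ := fun n => (ℙ {ω | c n ≤ |X ω|}).toReal with hp_def
  have hpsum : Summable p := hsum
  have hpnn : ∀ i, 0 ≤ p i := fun i => ENNReal.toReal_nonneg
  set S : ℕ → Set Ω := fun j => {ω | c j < |X ω| ∧ |X ω| ≤ c (j + 1)} with hS_def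
  have hSmeas : ∀ j, MeasurableSet (S j) := fun j =>
    (measurableSet_lt measurable_const hX.abs).inter (measurableSet_le hX.abs measurable_const)
  set ρ : ℕ → ℝ := fun j => (ℙ (S j)).toReal with hρ_def
  have hρnn : ∀ j, 0 ≤ ρ j := fun j => ENNReal.toReal_nonneg
  have hρ1 : ∀ j, ρ j ≤ 1 := by
    intro j
    have h1 : ℙ (S j) ≤ ℙ (Set.univ : Set Ω) := measure_mono (Set.subset_univ _)
    have := ENNReal.toReal_mono (measure_ne_top _ _) h1
    simpa using this
  have hsqrt : ∀ n : ℕ, 1 ≤ n → (0 : ℝ) < Real.sqrt n := by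
    intro n hn
    apply Real.sqrt_pos.mpr
    exact_mod_cast Nat.pos_of_ne_zero (by omega)
  have hcmono : ∀ m n : ℕ, 1 ≤ m → m ≤ n → c m ≤ c n := by
    intro m n hm hmn
    have hn : 1 ≤ n := le_trans hm hmn
    have h := hmono m n hm hmn
    have h1 : c m = c m / Real.sqrt m * Real.sqrt m :=
      (div_mul_cancel₀ _ (ne_of_gt (hsqrt m hm))).symm
    rw [h1]
    calc c m / Real.sqrt m * Real.sqrt m
        ≤ c n / Real.sqrt n * Real.sqrt n := by
          apply mul_le_mul h (Real.sqrt_le_sqrt (by exact_mod_cast hmn)) (Real.sqrt_nonneg _)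
            (div_nonneg (hcpos n hn).le (Real.sqrt_nonneg _))
      _ = c n := div_mul_cancel₀ _ (ne_of_gt (hsqrt n hn))
  -- key inequality
  have hkey : ∀ j n : ℕ, j + 1 ≤ n → (n : ℝ) / c n ^ 2 * c (j + 1) ^ 2 ≤ (j : ℝ) + 1 := by
    intro j n hjn
    have hj1 : 1 ≤ j + 1 := Nat.le_add_left 1 j
    have hn1 : 1 ≤ n := le_trans hj1 hjn
    have h := hmono (j + 1) n hj1 hjn
    have h0 : 0 ≤ c (j + 1) / Real.sqrt (((j + 1 : ℕ) : ℝ)) :=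
      div_nonneg (hcpos _ hj1).le (Real.sqrt_nonneg _)
    have h2 := mul_self_le_mul_self h0 h
    have e1 : ∀ k : ℕ, c k / Real.sqrt k * (c k / Real.sqrt k) = c k ^ 2 / (k : ℝ) := by
      intro k
      rw [div_mul_div_comm, Real.mul_self_sqrt (Nat.cast_nonneg k), ← pow_two]
    rw [e1 (j + 1), e1 n] at h2
    push_cast at h2
    have hnpos : (0 : ℝ) < n := by exact_mod_cast hn1
    have hjpos : (0 : ℝ) < (j : ℝ) + 1 := by positivity
    rw [div_le_div_iff₀ hjpos hnpos] at h2
    have hc2 : (0 : ℝ) < c n ^ 2 := pow_pos (hcpos n hn1) 2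
    rw [div_mul_eq_mul_div, div_le_iff₀ hc2]
    linear_combination h2
  -- integrability
  have hmeasI : ∀ n : ℕ, Measurable (fun ω => if |X ω| ≤ c n then X ω ^ 2 else 0) := fun n =>
    Measurable.ite (measurableSet_le hX.abs measurable_const) (hX.pow_const 2) measurable_const
  have hInt : ∀ n : ℕ, 1 ≤ n → Integrable (fun ω => if |X ω| ≤ c n then X ω ^ 2 else 0) := by
    intro n hn
    refine (integrable_const (c n ^ 2)).mono' (hmeasI n).aestronglyMeasurable (ae_of_all _ ?_)
    intro ω
    by_cases h : |X ω| ≤ c n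
    · rw [if_pos h, Real.norm_eq_abs, abs_of_nonneg (sq_nonneg _)]
      calc X ω ^ 2 = |X ω| ^ 2 := (sq_abs _).symm
        _ ≤ c n ^ 2 := pow_le_pow_left₀ (abs_nonneg _) h 2
    · rw [if_neg h]
      simpa using sq_nonneg (c n)
  set t : ℕ → Ω → ℝ := fun j ω => if c j < |X ω| ∧ |X ω| ≤ c (j + 1) then c (j + 1) ^ 2 else 0
    with ht_def
  have htnn : ∀ j ω, 0 ≤ t j ω := by
    intro j ω
    simp only [ht_def]
    split_ifs
    · exact sq_nonneg _
    · exact le_refl 0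
  have htmeas : ∀ j, Measurable (t j) := fun j =>
    Measurable.ite (hSmeas j) measurable_const measurable_const
  have htint : ∀ j, Integrable (t j) := by
    intro j
    refine (integrable_const (c (j + 1) ^ 2)).mono' (htmeas j).aestronglyMeasurable
      (ae_of_all _ ?_)
    intro ω
    simp only [ht_def]
    split_ifs
    · rw [Real.norm_eq_abs, abs_of_nonneg (sq_nonneg _)]
    · simpa using sq_nonneg (c (j + 1))
  have htval : ∀ j, (∫ ω, t j ω) = c (j + 1) ^ 2 * ρ j := by
    intro j
    have heq : t j = fun ω => (S j).indicator (fun _ => c (j + 1) ^ 2) ω := by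
      funext ω
      by_cases h : ω ∈ S j
      · have h' : c j < |X ω| ∧ |X ω| ≤ c (j + 1) := h
        simp only [ht_def, if_pos h', Set.indicator_of_mem h]
      · have h' : ¬(c j < |X ω| ∧ |X ω| ≤ c (j + 1)) := h
        simp only [ht_def, if_neg h', Set.indicator_of_notMem h]
    rw [heq, integral_indicator_const _ (hSmeas j)]
    simp [hρ_def, mul_comm, measureReal_def]
  -- pointwise shell bound
  have hpt : ∀ m : ℕ, 1 ≤ m → ∀ n : ℕ, m ≤ n → ∀ ω,
      (if |X ω| ≤ c n then X ω ^ 2 else 0) ≤ c m ^ 2 + ∑ j ∈ Finset.Ico m n, t j ω := by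
    intro m hm n hmn ω
    induction n, hmn using Nat.le_induction with
    | base =>
      simp only [Finset.Ico_self, Finset.sum_empty, add_zero]
      split_ifs with h
      · calc X ω ^ 2 = |X ω| ^ 2 := (sq_abs _).symm
          _ ≤ c m ^ 2 := pow_le_pow_left₀ (abs_nonneg _) h 2
      · exact sq_nonneg _
    | succ n hn ih =>
      rw [Finset.sum_Ico_succ_top hn]
      have hsumnn : 0 ≤ ∑ j ∈ Finset.Ico m n, t j ω :=
        Finset.sum_nonneg fun j _ => htnn j ω
      have hcm2 : (0 : ℝ) ≤ c m ^ 2 := sq_nonneg _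
      have htn := htnn n ω
      by_cases h1 : |X ω| ≤ c n
      · have h2 : |X ω| ≤ c (n + 1) := le_trans h1 (hcmono n (n + 1) (le_trans hm hn) (Nat.le_succ n))
        rw [if_pos h2]
        rw [if_pos h1] at ih
        linarith
      · by_cases h2 : |X ω| ≤ c (n + 1)
        · rw [if_pos h2]
          have ht : t n ω = c (n + 1) ^ 2 := by
            simp only [ht_def]
            rw [if_pos ⟨not_le.mp h1, h2⟩]
          have hx : X ω ^ 2 ≤ c (n + 1) ^ 2 := by
            calc X ω ^ 2 = |X ω| ^ 2 := (sq_abs _).symm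
              _ ≤ c (n + 1) ^ 2 := pow_le_pow_left₀ (abs_nonneg _) h2 2
          rw [ht]
          linarith
        · rw [if_neg h2]
          linarith
  -- shell measure bound
  have hshell : ∀ i N : ℕ, 1 ≤ i → ∑ j ∈ Finset.Ico i N, ρ j ≤ p i := by
    intro i N hi
    have key : ∀ a b : ℕ, 1 ≤ a → a < b → Disjoint (S a) (S b) := by
      intro a b ha1 hab
      rw [Set.disjoint_left]
      intro ω hωa hωb
      have h1 : |X ω| ≤ c (a + 1) := hωa.2
      have h2 : c b < |X ω| := hωb.1
      have h3 : c (a + 1) ≤ c b := hcmono (a + 1) b (by omega) (by omega)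
      linarith
    have hdisj : (↑(Finset.Ico i N) : Set ℕ).PairwiseDisjoint S := by
      intro a ha b hb hab
      simp only [Finset.coe_Ico, Set.mem_Ico] at ha hb
      rcases lt_or_gt_of_ne hab with h | h
      · exact key a b (by omega) h
      · exact (key b a (by omega) h).symm
    have hmeq : ℙ (⋃ j ∈ Finset.Ico i N, S j) = ∑ j ∈ Finset.Ico i N, ℙ (S j) :=
      measure_biUnion_finset hdisj fun j _ => hSmeas j
    have hsub : (⋃ j ∈ Finset.Ico i N, S j) ⊆ {ω | c i ≤ |X ω|} := by
      intro ω hω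
      simp only [Set.mem_iUnion, exists_prop] at hω
      obtain ⟨j, hj, hωj⟩ := hω
      simp only [Finset.mem_Ico] at hj
      have h3 : c i ≤ c j := hcmono i j hi hj.1
      have h4 : c j < |X ω| := hωj.1
      exact le_of_lt (lt_of_le_of_lt h3 h4)
    calc ∑ j ∈ Finset.Ico i N, ρ j
        = (∑ j ∈ Finset.Ico i N, ℙ (S j)).toReal :=
          (ENNReal.toReal_sum fun j _ => measure_ne_top _ _).symm
      _ ≤ p i := ENNReal.toReal_mono (measure_ne_top _ _) (hmeq ▸ measure_mono hsub)
  -- summability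
  set f : ℕ → ℝ := fun j => ((j : ℝ) + 1) * ρ j with hf_def
  have hfnn : ∀ j, 0 ≤ f j := fun j => mul_nonneg (by positivity) (hρnn j)
  have htsumnn : 0 ≤ ∑' i, p i := tsum_nonneg hpnn
  have hf : Summable f := by
    apply summable_of_sum_range_le (c := 1 + 2 * ∑' i, p i) hfnn
    intro N
    rcases Nat.eq_zero_or_pos N with h | h
    · subst h
      simp only [Finset.range_zero, Finset.sum_empty]
      linarith
    · have hs : ∑ j ∈ Finset.range N, f j = f 0 + ∑ j ∈ Finset.Ico 1 N, f j := by
        rw [Finset.range_eq_Ico, ← Finset.sum_Ico_consecutive f (Nat.zero_le 1) h]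
        congr 1
        rw [Finset.sum_Ico_eq_sum_range]
        simp
      have hf0 : f 0 ≤ 1 := by
        have := hρ1 0
        simp only [hf_def]
        push_cast
        linarith [hρnn 0]
      have hmain : ∑ j ∈ Finset.Ico 1 N, f j ≤ 2 * ∑' i, p i := by
        have step1 : ∀ j ∈ Finset.Ico 1 N,
            f j ≤ 2 * ∑ i ∈ Finset.Ico 1 N, (if i ≤ j then ρ j else 0) := by
          intro j hj
          simp only [Finset.mem_Ico] at hj
          have heq : ∑ i ∈ Finset.Ico 1 N, (if i ≤ j then ρ j else 0) = (j : ℝ) * ρ j := by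
            rw [← Finset.sum_filter]
            have hfil : Finset.filter (fun i => i ≤ j) (Finset.Ico 1 N) = Finset.Ico 1 (j + 1) := by
              ext i
              simp only [Finset.mem_filter, Finset.mem_Ico]
              omega
            rw [hfil, Finset.sum_const, Nat.card_Ico]
            simp [nsmul_eq_mul]
          rw [heq]
          show ((j : ℝ) + 1) * ρ j ≤ 2 * ((j : ℝ) * ρ j)
          have hρj := hρnn j
          have hj1 : (1 : ℝ) ≤ (j : ℝ) := by exact_mod_cast hj.1
          nlinarith
        calc ∑ j ∈ Finset.Ico 1 N, f j
            ≤ ∑ j ∈ Finset.Ico 1 N, 2 * ∑ i ∈ Finset.Ico 1 N, (if i ≤ j then ρ j else 0) :=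
              Finset.sum_le_sum step1
          _ = 2 * ∑ j ∈ Finset.Ico 1 N, ∑ i ∈ Finset.Ico 1 N, (if i ≤ j then ρ j else 0) := by
              rw [← Finset.mul_sum]
          _ = 2 * ∑ i ∈ Finset.Ico 1 N, ∑ j ∈ Finset.Ico 1 N, (if i ≤ j then ρ j else 0) := by
              congr 1
              exact Finset.sum_comm
          _ ≤ 2 * ∑ i ∈ Finset.Ico 1 N, p i := by
              have hss : ∑ i ∈ Finset.Ico 1 N, ∑ j ∈ Finset.Ico 1 N, (if i ≤ j then ρ j else 0)
                  ≤ ∑ i ∈ Finset.Ico 1 N, p i := by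
                apply Finset.sum_le_sum
                intro i hi
                simp only [Finset.mem_Ico] at hi
                have heq2 : ∑ j ∈ Finset.Ico 1 N, (if i ≤ j then ρ j else 0)
                    = ∑ j ∈ Finset.Ico i N, ρ j := by
                  rw [← Finset.sum_filter]
                  congr 1
                  ext j
                  simp only [Finset.mem_filter, Finset.mem_Ico]
                  omega
                rw [heq2]
                exact hshell i N hi.1
              linarith
          _ ≤ 2 * ∑' i, p i := by
              have := Summable.sum_le_tsum (Finset.Ico 1 N) (fun i _ => hpnn i) hpsum
              linarith
      linarith
  -- integral bound
  have hIbound : ∀ m : ℕ, 1 ≤ m → ∀ n : ℕ, m ≤ n →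
      (∫ ω, (if |X ω| ≤ c n then X ω ^ 2 else 0)) ≤
        c m ^ 2 + ∑ j ∈ Finset.Ico m n, c (j + 1) ^ 2 * ρ j := by
    intro m hm n hmn
    have hg : Integrable (fun ω => c m ^ 2 + ∑ j ∈ Finset.Ico m n, t j ω) :=
      (integrable_const _).add (integrable_finset_sum _ fun j _ => htint j)
    have hle := integral_mono (hInt n (le_trans hm hmn)) hg (fun ω => hpt m hm n hmn ω)
    calc (∫ ω, (if |X ω| ≤ c n then X ω ^ 2 else 0))
        ≤ ∫ ω, (c m ^ 2 + ∑ j ∈ Finset.Ico m n, t j ω) := hle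
      _ = c m ^ 2 + ∑ j ∈ Finset.Ico m n, ∫ ω, t j ω := by
          rw [integral_add (integrable_const _) (integrable_finset_sum _ fun j _ => htint j),
            integral_const, integral_finset_sum _ fun j _ => htint j]
          simp
      _ = c m ^ 2 + ∑ j ∈ Finset.Ico m n, c (j + 1) ^ 2 * ρ j := by
          congr 1
          exact Finset.sum_congr rfl fun j _ => htval j
  -- n / c n ^ 2 → 0
  have hzero : Tendsto (fun n : ℕ => (n : ℝ) / c n ^ 2) atTop (nhds 0) := by
    have h0 : Tendsto (fun n : ℕ => (c n / Real.sqrt n)⁻¹) atTop (nhds 0) :=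
      htop.inv_tendsto_atTop
    have h1 : Tendsto (fun n : ℕ => ((c n / Real.sqrt n)⁻¹) ^ 2) atTop (nhds 0) := by
      have := h0.pow 2
      simpa using this
    apply h1.congr'
    filter_upwards [eventually_ge_atTop 1] with n hn
    rw [inv_div, div_pow, Real.sq_sqrt (Nat.cast_nonneg n)]
  -- final ε argument
  rw [Metric.tendsto_atTop]
  intro ε hε
  have htail := tendsto_sum_nat_add f
  rw [Metric.tendsto_atTop] at htail
  obtain ⟨m₀, hm₀⟩ := htail (ε / 2) (by linarith)
  set m := max m₀ 1 with hm_def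
  have hm1 : 1 ≤ m := le_max_right _ _
  have htail2 : ∑' k, f (k + m) < ε / 2 := by
    have h := hm₀ m (le_max_left _ _)
    rw [Real.dist_eq, sub_zero] at h
    exact lt_of_le_of_lt (le_abs_self _) h
  have h2 := hzero.mul_const (c m ^ 2)
  rw [zero_mul] at h2
  rw [Metric.tendsto_atTop] at h2
  obtain ⟨N₀, hN₀⟩ := h2 (ε / 2) (by linarith)
  refine ⟨max N₀ m, fun n hn => ?_⟩
  have hnN : N₀ ≤ n := le_trans (le_max_left _ _) hn
  have hmn : m ≤ n := le_trans (le_max_right _ _) hn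
  have hn1 : 1 ≤ n := le_trans hm1 hmn
  rw [Real.dist_eq, sub_zero]
  have hInn : 0 ≤ ∫ ω, (if |X ω| ≤ c n then X ω ^ 2 else 0) := by
    apply integral_nonneg
    intro ω
    simp only [Pi.zero_apply]
    split_ifs
    · exact sq_nonneg _
    · exact le_refl 0
  rw [abs_of_nonneg (div_nonneg (mul_nonneg (Nat.cast_nonneg n) hInn) (sq_nonneg _))]
  have hnc : 0 ≤ (n : ℝ) / c n ^ 2 := div_nonneg (Nat.cast_nonneg n) (sq_nonneg _)
  have hchain : (n : ℝ) * (∫ ω, (if |X ω| ≤ c n then X ω ^ 2 else 0)) / c n ^ 2 ≤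
      (n : ℝ) / c n ^ 2 * c m ^ 2 + ∑ j ∈ Finset.Ico m n, f j := by
    have hb := hIbound m hm1 n hmn
    calc (n : ℝ) * (∫ ω, (if |X ω| ≤ c n then X ω ^ 2 else 0)) / c n ^ 2
        = (n : ℝ) / c n ^ 2 * (∫ ω, (if |X ω| ≤ c n then X ω ^ 2 else 0)) := by ring
      _ ≤ (n : ℝ) / c n ^ 2 * (c m ^ 2 + ∑ j ∈ Finset.Ico m n, c (j + 1) ^ 2 * ρ j) :=
          mul_le_mul_of_nonneg_left hb hnc
      _ = (n : ℝ) / c n ^ 2 * c m ^ 2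
            + ∑ j ∈ Finset.Ico m n, (n : ℝ) / c n ^ 2 * (c (j + 1) ^ 2 * ρ j) := by
          rw [mul_add, Finset.mul_sum]
      _ ≤ (n : ℝ) / c n ^ 2 * c m ^ 2 + ∑ j ∈ Finset.Ico m n, f j := by
          apply add_le_add le_rfl
          apply Finset.sum_le_sum
          intro j hj
          simp only [Finset.mem_Ico] at hj
          have hk := hkey j n (by omega)
          rw [← mul_assoc, hf_def]
          exact mul_le_mul_of_nonneg_right hk (hρnn j)
  have htail3 : ∑ j ∈ Finset.Ico m n, f j ≤ ∑' k, f (k + m) := by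
    rw [Finset.sum_Ico_eq_sum_range]
    have hsummt : Summable fun k => f (k + m) := (summable_nat_add_iff m).mpr hf
    calc ∑ k ∈ Finset.range (n - m), f (m + k)
        = ∑ k ∈ Finset.range (n - m), f (k + m) := by
          exact Finset.sum_congr rfl fun k _ => by rw [add_comm]
      _ ≤ ∑' k, f (k + m) := Summable.sum_le_tsum _ (fun k _ => hfnn _) hsummt
  have hhead : (n : ℝ) / c n ^ 2 * c m ^ 2 < ε / 2 := by
    have h := hN₀ n hnN
    rw [Real.dist_eq, sub_zero] at h
    exact lt_of_le_of_lt (le_abs_self _) h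
  linarith
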